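/- The matrix A_odd defined by A_odd(i,j) = 1 if W_H(i) and W_H(j) have different parity and 0 otherwise, is (up to a permutation of indices, i.e., unitary conjugation by a permutation matrix) equal to the tensor product J^{⊗(n-1)} ⊗ X, where J is the 2×2 all-ones matrix and X is the 2×2 matrix with 0 on the diagonal and 1 off-diagonal. -/

import Mathlib

open Matrix Finset
open scoped ComplexOrder Kronecker

/-- Trace norm `tr √(Aᴴ A)` of a complex square matrix. -/
noncomputable def traceNorm {ι : Type*} [Fintype ι] [DecidableEq ι] (A : Matrix ι ι ℂ) : ℝ :=
  (((Matrix.posSemidef_conjTranspose_mul_self A).1.eigenvectorUnitary.1 *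
      diagonal (((↑) : ℝ → ℂ) ∘ Real.sqrt ∘ (Matrix.posSemidef_conjTranspose_mul_self A).1.eigenvalues) *
      (star (Matrix.posSemidef_conjTranspose_mul_self A).1.eigenvectorUnitary : Matrix ι ι ℂ)).trace).re

/-- Bitwise XOR on bit strings. -/
def xo {n : ℕ} (i k : Fin n → Bool) : Fin n → Bool := fun j => xor (i j) (k j)

/-- Hamming weight of a bit string. -/
def wt {n : ℕ} (i : Fin n → Bool) : ℕ := (Finset.univ.filter fun j => i j = true).card

/-- The rank-one operator `|i⟩⟨j|`. -/
def ketbra {n : ℕ} (i j : Fin n → Bool) : Matrix (Fin n → Bool) (Fin n → Bool) ℂ :=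
  Matrix.single i j 1

/-- `ρ⁰_{k,i} = ½(|i⟩+|i⊕k⟩)(⟨i|+⟨i⊕k|)`. -/
noncomputable def rho0 {n : ℕ} (k i : Fin n → Bool) : Matrix (Fin n → Bool) (Fin n → Bool) ℂ :=
  (1/2 : ℂ) • (ketbra i i + ketbra i (xo i k) + ketbra (xo i k) i + ketbra (xo i k) (xo i k))

/-- `ρ¹_{k,i} = ½(|i⟩-|i⊕k⟩)(⟨i|-⟨i⊕k|)`. -/
noncomputable def rho1 {n : ℕ} (k i : Fin n → Bool) : Matrix (Fin n → Bool) (Fin n → Bool) ℂ :=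
  (1/2 : ℂ) • (ketbra i i - ketbra i (xo i k) - ketbra (xo i k) i + ketbra (xo i k) (xo i k))

/-- `Ω_n`, the set of bit strings of odd Hamming weight. -/
def Omega (n : ℕ) : Finset (Fin n → Bool) := Finset.univ.filter fun k => Odd (wt k)

lemma wt_eq_sum {n : ℕ} (i : Fin n → Bool) : wt i = ∑ j, if i j = true then 1 else 0 := by
  rw [wt, Finset.card_filter]

lemma wt_snoc {m : ℕ} (p : Fin m → Bool) (c : Bool) :
    wt (Fin.snoc p c : Fin (m+1) → Bool) = wt p + (if c then 1 else 0) := by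
  rw [wt_eq_sum, wt_eq_sum, Fin.sum_univ_castSucc]
  simp

lemma par_snoc {m : ℕ} (p : Fin m → Bool) (c : Bool) :
    decide (wt (Fin.snoc p c : Fin (m+1) → Bool) % 2 = 1)
      = xor (decide (wt p % 2 = 1)) c := by
  rcases c
  · simp [wt_snoc]
  · rw [wt_snoc]
    simp only [if_true, Bool.xor_true]
    rw [← decide_not, decide_eq_decide]
    omega

theorem parity_matrix_eq_tensor (n : ℕ) (hn : 1 ≤ n)
    (A : Matrix (Fin n → Bool) (Fin n → Bool) ℂ)
    (hA : ∀ i j, A i j = if wt i % 2 ≠ wt j % 2 then 1 else 0)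
    (J : Matrix (Fin (n-1) → Bool) (Fin (n-1) → Bool) ℂ) (hJ : ∀ i j, J i j = 1)
    (X : Matrix Bool Bool ℂ) (hX : ∀ b c, X b c = if b = c then 0 else 1) :
    ∃ e : ((Fin (n-1) → Bool) × Bool) ≃ (Fin n → Bool),
      A.submatrix e e = J ⊗ₖ X := by
  obtain ⟨m, rfl⟩ : ∃ m, n = m + 1 := ⟨n - 1, (Nat.succ_pred_eq_of_pos hn).symm⟩
  set par : (Fin m → Bool) → Bool := fun p => decide (wt p % 2 = 1) with hpar
  refine ⟨⟨fun pb => Fin.snoc pb.1 (xor (par pb.1) pb.2),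
    fun x => (Fin.init x, decide (wt x % 2 = 1)), ?_, ?_⟩, ?_⟩
  · rintro ⟨p, b⟩
    simp [par_snoc, Fin.init_snoc, hpar]
  · intro x
    have h := par_snoc (Fin.init x) (x (Fin.last m))
    rw [Fin.snoc_init_self] at h
    simp only [hpar]
    rw [h]
    simp [Bool.xor_assoc, Fin.snoc_init_self]
  · have key : ∀ (p : Fin m → Bool) (b : Bool),
        wt (Fin.snoc p (xor (par p) b) : Fin (m+1) → Bool) % 2 = if b then 1 else 0 := by
      intro p b
      have h := par_snoc p (xor (par p) b)
      rw [← Bool.xor_assoc, Bool.xor_self, Bool.false_xor] at h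
      rcases b <;>
        simp only [Bool.xor_false, Bool.xor_true] at h ⊢ <;>
        simp only [decide_eq_false_iff_not, decide_eq_true_eq] at h <;>
        norm_num <;> omega
    ext ⟨p, b⟩ ⟨q, c⟩
    simp only [Matrix.submatrix_apply, hA, Matrix.kroneckerMap_apply, hJ, hX, Equiv.coe_fn_mk]
    rw [key p b, key q c]
    rcases b <;> rcases c <;> norm_num
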